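/- Chain rule for squared functions: let f, g be locally Lipschitz on a metric space X with g ≥ 0. Then D⁺f(∇g²)(x) = 2 g(x) · D⁺f(∇g)(x) for every x ∈ X, where g² denotes the pointwise square of g and D⁺f(∇h)(x) := inf_{ε>0} (lip(h+εf)²(x) − lip(h)²(x))/(2ε). -/

import Mathlib

open Filter Metric MeasureTheory Topology Pointwise

section aux
variable {α : Type*} {l : Filter α} [l.NeBot]

private lemma limsup_le_of_abs_sub {F G e : α → ℝ}
    (hF0 : ∀ y, 0 ≤ F y) (hG0 : ∀ y, 0 ≤ G y)
    (hbG : IsBoundedUnder (· ≤ ·) l G)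
    (he : Tendsto e l (𝓝 0))
    (hFG : ∀ᶠ y in l, |F y - G y| ≤ e y) :
    limsup F l ≤ limsup G l := by
  refine le_of_forall_pos_le_add fun η hη => ?_
  have hev : ∀ᶠ y in l, F y ≤ G y + η := by
    filter_upwards [hFG, he.eventually (eventually_le_nhds hη)] with y h1 h2
    have := (abs_le.mp (h1.trans h2)).2
    linarith
  have hbG' : IsBoundedUnder (· ≤ ·) l (fun y => G y + η) := by
    obtain ⟨M, hM⟩ := hbG
    have hM' : ∀ᶠ y in l, G y ≤ M := eventually_map.mp hM
    exact ⟨M + η, eventually_map.mpr (hM'.mono fun y hy => by show G y + η ≤ M + η; linarith)⟩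
  have hcF : IsCoboundedUnder (· ≤ ·) l F :=
    isCoboundedUnder_le_of_le l (x := 0) hF0
  have hcG : IsCoboundedUnder (· ≤ ·) l G :=
    isCoboundedUnder_le_of_le l (x := 0) hG0
  calc limsup F l ≤ limsup (fun y => G y + η) l := limsup_le_limsup hev hcF hbG'
    _ = limsup G l + η := limsup_add_const l G η hbG hcG

private lemma limsup_eq_of_abs_sub {F G e : α → ℝ}
    (hF0 : ∀ y, 0 ≤ F y) (hG0 : ∀ y, 0 ≤ G y)
    (hbG : IsBoundedUnder (· ≤ ·) l G)
    (he : Tendsto e l (𝓝 0))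
    (hFG : ∀ᶠ y in l, |F y - G y| ≤ e y) :
    limsup F l = limsup G l := by
  have hbF : IsBoundedUnder (· ≤ ·) l F := by
    obtain ⟨M, hM⟩ := hbG
    have hM' : ∀ᶠ y in l, G y ≤ M := eventually_map.mp hM
    refine ⟨M + 1, eventually_map.mpr ?_⟩
    filter_upwards [hFG, he.eventually (eventually_le_nhds one_pos), hM'] with y h1 h2 h3
    have := (abs_le.mp (h1.trans h2)).2
    linarith
  refine le_antisymm (limsup_le_of_abs_sub hF0 hG0 hbG he hFG)
    (limsup_le_of_abs_sub hG0 hF0 hbF he ?_)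
  filter_upwards [hFG] with y h
  rwa [abs_sub_comm]

private lemma limsup_const_mul_of_pos {u : α → ℝ} {c : ℝ} (hc : 0 < c)
    (hb : IsBoundedUnder (· ≤ ·) l u) (h0 : ∀ y, 0 ≤ u y) :
    limsup (fun y => c * u y) l = c * limsup u l := by
  have hcob : (l.map u).IsCobounded (· ≤ ·) := isCoboundedUnder_le_of_le l (x := 0) h0
  have := Monotone.map_limsSup_of_continuousAt (F := l.map u) (f := fun x : ℝ => c * x)
    (fun a b hab => mul_le_mul_of_nonneg_left hab hc.le) (continuous_mul_left c).continuousAt hb hcob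
  simpa [Filter.limsup, Filter.map_map, Function.comp_def] using this.symm

end aux

section metric
variable {X : Type*} [MetricSpace X]

open Classical in
noncomputable def lipSlope (f : X → ℝ) (x : X) : ℝ :=
  if (𝓝[≠] x) = ⊥ then 0
  else Filter.limsup (fun y => |f x - f y| / dist x y) (𝓝[≠] x)

noncomputable def Dplus (f g : X → ℝ) (x : X) : ℝ :=
  sInf ((fun ε : ℝ =>
    ((lipSlope (fun y => g y + ε * f y) x) ^ 2 - (lipSlope g x) ^ 2) / (2 * ε)) '' Set.Ioi 0)

noncomputable def Dminus (f g : X → ℝ) (x : X) : ℝ :=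
  sSup ((fun ε : ℝ =>
    ((lipSlope (fun y => g y + ε * f y) x) ^ 2 - (lipSlope g x) ^ 2) / (2 * ε)) '' Set.Iio 0)

private lemma quot_bdd_combo {f g : X → ℝ} (hf : LocallyLipschitz f) (hg : LocallyLipschitz g)
    (a b : ℝ) (x : X) :
    IsBoundedUnder (· ≤ ·) (𝓝[≠] x)
      (fun y => |(a * g x + b * f x) - (a * g y + b * f y)| / dist x y) := by
  obtain ⟨Kg, tg, htg, hKg⟩ := hg x
  obtain ⟨Kf, tf, htf, hKf⟩ := hf x
  refine ⟨|a| * Kg + |b| * Kf, eventually_map.mpr ?_⟩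
  filter_upwards [mem_nhdsWithin_of_mem_nhds htg, mem_nhdsWithin_of_mem_nhds htf,
    eventually_mem_nhdsWithin] with y hyg hyf hyx
  have hd : 0 < dist x y := dist_pos.2 (Ne.symm hyx)
  have h1 : |g x - g y| ≤ Kg * dist x y := by
    have := hKg.dist_le_mul x (mem_of_mem_nhds htg) y hyg
    rwa [Real.dist_eq] at this
  have h2 : |f x - f y| ≤ Kf * dist x y := by
    have := hKf.dist_le_mul x (mem_of_mem_nhds htf) y hyf
    rwa [Real.dist_eq] at this
  rw [div_le_iff₀ hd]
  calc |(a * g x + b * f x) - (a * g y + b * f y)| = |a * (g x - g y) + b * (f x - f y)| := by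
        ring_nf
    _ ≤ |a| * |g x - g y| + |b| * |f x - f y| := by
        refine (abs_add_le _ _).trans ?_; rw [abs_mul, abs_mul]
    _ ≤ (|a| * Kg + |b| * Kf) * dist x y := by
        have := abs_nonneg a; have := abs_nonneg b; nlinarith

private lemma lipSlope_congr {u v : X → ℝ} {C : ℝ} (x : X)
    (hbv : IsBoundedUnder (· ≤ ·) (𝓝[≠] x) (fun y => |v x - v y| / dist x y))
    (hdiff : ∀ᶠ y in 𝓝[≠] x, |(u x - u y) - (v x - v y)| ≤ C * dist x y ^ 2) :
    lipSlope u x = lipSlope v x := by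
  unfold lipSlope
  by_cases hbot : (𝓝[≠] x) = ⊥
  · rw [if_pos hbot, if_pos hbot]
  · rw [if_neg hbot, if_neg hbot]
    haveI : NeBot (𝓝[≠] x) := ⟨hbot⟩
    have htend : Tendsto (fun y => C * dist x y) (𝓝[≠] x) (𝓝 0) := by
      have hd : Tendsto (fun y => dist x y) (𝓝[≠] x) (𝓝 0) := by
        have h0 : Tendsto (fun y : X => dist x y) (𝓝 x) (𝓝 (dist x x)) :=
          (continuous_const.dist continuous_id).tendsto x
        rw [dist_self] at h0
        exact h0.mono_left nhdsWithin_le_nhds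
      simpa using hd.const_mul C
    refine limsup_eq_of_abs_sub (fun y => div_nonneg (abs_nonneg _) dist_nonneg)
      (fun y => div_nonneg (abs_nonneg _) dist_nonneg) hbv htend ?_
    filter_upwards [hdiff, eventually_mem_nhdsWithin] with y h hyx
    have hd : 0 < dist x y := dist_pos.2 (Ne.symm hyx)
    calc |(|u x - u y| / dist x y) - (|v x - v y| / dist x y)|
        = (abs (|u x - u y| - |v x - v y|)) / dist x y := by
          rw [div_sub_div_same, abs_div, abs_of_pos hd]
      _ ≤ |(u x - u y) - (v x - v y)| / dist x y :=
          (div_le_div_iff_of_pos_right hd).2 (abs_abs_sub_abs_le_abs_sub _ _)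
      _ ≤ (C * dist x y ^ 2) / dist x y := (div_le_div_iff_of_pos_right hd).2 h
      _ = C * dist x y := by field_simp

private lemma lipSlope_const_mul {h : X → ℝ} {c : ℝ} {x : X} (hc : 0 < c)
    (hb : IsBoundedUnder (· ≤ ·) (𝓝[≠] x) (fun y => |h x - h y| / dist x y)) :
    lipSlope (fun y => c * h y) x = c * lipSlope h x := by
  unfold lipSlope
  by_cases hbot : (𝓝[≠] x) = ⊥
  · simp [hbot]
  · rw [if_neg hbot, if_neg hbot]
    haveI : NeBot (𝓝[≠] x) := ⟨hbot⟩
    have heq : (fun y => |c * h x - c * h y| / dist x y)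
        = fun y => c * (|h x - h y| / dist x y) := by
      funext y; rw [← mul_sub, abs_mul, abs_of_pos hc, mul_div_assoc]
    rw [heq, limsup_const_mul_of_pos hc hb (fun y => div_nonneg (abs_nonneg _) dist_nonneg)]

private lemma lipSlope_zero (x : X) : lipSlope (fun _ : X => (0:ℝ)) x = 0 := by
  unfold lipSlope
  by_cases hbot : (𝓝[≠] x) = ⊥
  · rw [if_pos hbot]
  · rw [if_neg hbot]
    haveI : NeBot (𝓝[≠] x) := ⟨hbot⟩
    simp [limsup_const]


private lemma sInf_mul_Ioi {c : ℝ} (hc : 0 ≤ c) :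
    sInf ((fun ε : ℝ => ε * c) '' Set.Ioi 0) = 0 := by
  apply le_antisymm
  · refine le_of_forall_pos_le_add fun η hη => ?_
    have hbdd : BddBelow ((fun ε : ℝ => ε * c) '' Set.Ioi 0) := by
      refine ⟨0, ?_⟩
      rintro b ⟨ε, hε, rfl⟩
      exact mul_nonneg (le_of_lt (Set.mem_Ioi.mp hε)) hc
    have hmem : (η / (c + 1)) * c ∈ (fun ε : ℝ => ε * c) '' Set.Ioi 0 :=
      ⟨η / (c + 1), Set.mem_Ioi.mpr (by positivity), rfl⟩
    have hle : (η / (c + 1)) * c ≤ η := by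
      rw [div_mul_eq_mul_div, div_le_iff₀ (by positivity)]
      nlinarith
    have := csInf_le hbdd hmem
    linarith
  · refine le_csInf ⟨1 * c, ⟨1, Set.mem_Ioi.mpr one_pos, rfl⟩⟩ ?_
    rintro b ⟨ε, hε, rfl⟩
    exact mul_nonneg (le_of_lt (Set.mem_Ioi.mp hε)) hc

theorem Dplus_chain_sq (f g : X → ℝ)
    (hf : LocallyLipschitz f) (hg : LocallyLipschitz g) (hg0 : ∀ y, 0 ≤ g y) :
    ∀ x : X, Dplus f (fun y => (g y) ^ 2) x = 2 * g x * Dplus f g x := by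
  intro x
  have key : ∀ ε : ℝ, lipSlope (fun y => (g y) ^ 2 + ε * f y) x
      = lipSlope (fun y => 2 * g x * g y + ε * f y) x := by
    intro ε
    obtain ⟨Kg, tg, htg, hKg⟩ := hg x
    refine lipSlope_congr (C := (Kg : ℝ) ^ 2) x (quot_bdd_combo hf hg (2 * g x) ε x) ?_
    filter_upwards [mem_nhdsWithin_of_mem_nhds htg] with y hy
    have h1 : |g x - g y| ≤ Kg * dist x y := by
      have := hKg.dist_le_mul x (mem_of_mem_nhds htg) y hy
      rwa [Real.dist_eq] at this
    have heq : ((g x) ^ 2 + ε * f x - ((g y) ^ 2 + ε * f y))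
        - ((2 * g x * g x + ε * f x) - (2 * g x * g y + ε * f y)) = -((g x - g y) ^ 2) := by
      ring
    rw [heq, abs_neg, abs_of_nonneg (sq_nonneg _)]
    calc (g x - g y) ^ 2 = |g x - g y| ^ 2 := (sq_abs _).symm
      _ ≤ (Kg * dist x y) ^ 2 := by nlinarith [abs_nonneg (g x - g y)]
      _ = (Kg : ℝ) ^ 2 * dist x y ^ 2 := by ring
  have hq : ∀ δ : ℝ, IsBoundedUnder (· ≤ ·) (𝓝[≠] x)
      (fun y => |(g x + δ * f x) - (g y + δ * f y)| / dist x y) := by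
    intro δ
    have := quot_bdd_combo hf hg 1 δ x
    simpa using this
  rcases eq_or_lt_of_le (hg0 x) with hs | hs
  · -- g x = 0
    have hs' : g x = 0 := hs.symm
    have h2 : lipSlope (fun y => (g y) ^ 2) x = 0 := by
      have hk := key 0
      simp only [zero_mul, add_zero] at hk
      have h0 : (fun y => 2 * g x * g y) = fun _ : X => (0 : ℝ) := by
        funext y; rw [hs']; ring
      rw [h0, lipSlope_zero] at hk
      exact hk
    have hA : ∀ ε ∈ Set.Ioi (0 : ℝ),
        ((lipSlope (fun y => (g y) ^ 2 + ε * f y) x) ^ 2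
          - (lipSlope (fun y => (g y) ^ 2) x) ^ 2) / (2 * ε)
        = ε * ((lipSlope f x) ^ 2 / 2) := by
      intro ε hε
      have hε' : (0 : ℝ) < ε := Set.mem_Ioi.mp hε
      have h1 : lipSlope (fun y => (g y) ^ 2 + ε * f y) x = ε * lipSlope f x := by
        rw [key ε]
        have heq : (fun y => 2 * g x * g y + ε * f y) = fun y => ε * f y := by
          funext y; rw [hs']; ring
        rw [heq]
        exact lipSlope_const_mul hε' (by simpa using quot_bdd_combo hf hg 0 1 x)
      rw [h1, h2]
      field_simp
      ring
    rw [hs']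
    simp only [Dplus]
    rw [Set.image_congr hA, sInf_mul_Ioi (by positivity)]
    ring
  · -- 0 < g x
    have h2s : (0 : ℝ) < 2 * g x := by linarith
    have hsl : ∀ δ : ℝ, lipSlope (fun y => 2 * g x * g y + (2 * g x * δ) * f y) x
        = 2 * g x * lipSlope (fun y => g y + δ * f y) x := by
      intro δ
      have heq : (fun y => 2 * g x * g y + (2 * g x * δ) * f y)
          = fun y => 2 * g x * (g y + δ * f y) := by funext y; ring
      rw [heq]
      exact lipSlope_const_mul h2s (hq δ)
    have h2 : lipSlope (fun y => (g y) ^ 2) x = 2 * g x * lipSlope g x := by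
      have hk := key 0
      simp only [zero_mul, add_zero] at hk
      have h0 := hsl 0
      simp only [mul_zero, zero_mul, add_zero] at h0
      exact hk.trans h0
    have hval : ∀ ε ∈ Set.Ioi (0 : ℝ),
        ((lipSlope (fun y => (g y) ^ 2 + ε * f y) x) ^ 2
          - (lipSlope (fun y => (g y) ^ 2) x) ^ 2) / (2 * ε)
        = 2 * g x * (((lipSlope (fun y => g y + (ε / (2 * g x)) * f y) x) ^ 2
            - (lipSlope g x) ^ 2) / (2 * (ε / (2 * g x)))) := by
      intro ε hε
      have hε' : (0 : ℝ) < ε := Set.mem_Ioi.mp hε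
      have hgx : g x ≠ 0 := ne_of_gt hs
      have h1 : lipSlope (fun y => (g y) ^ 2 + ε * f y) x
          = 2 * g x * lipSlope (fun y => g y + (ε / (2 * g x)) * f y) x := by
        have h0 := hsl (ε / (2 * g x))
        rw [show 2 * g x * (ε / (2 * g x)) = ε by field_simp] at h0
        rw [key ε]
        exact h0
      rw [h1, h2]
      field_simp
    simp only [Dplus]
    rw [Set.image_congr hval]
    have himg : (fun ε : ℝ => 2 * g x * (((lipSlope (fun y => g y + (ε / (2 * g x)) * f y) x) ^ 2
            - (lipSlope g x) ^ 2) / (2 * (ε / (2 * g x))))) '' Set.Ioi 0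
        = (fun δ : ℝ => 2 * g x * (((lipSlope (fun y => g y + δ * f y) x) ^ 2
            - (lipSlope g x) ^ 2) / (2 * δ))) '' Set.Ioi 0 := by
      ext v
      constructor
      · rintro ⟨ε, hε, rfl⟩
        exact ⟨ε / (2 * g x), Set.mem_Ioi.mpr (div_pos (Set.mem_Ioi.mp hε) h2s), rfl⟩
      · rintro ⟨δ, hδ, rfl⟩
        refine ⟨2 * g x * δ, Set.mem_Ioi.mpr (mul_pos h2s (Set.mem_Ioi.mp hδ)), ?_⟩
        have hd : 2 * g x * δ / (2 * g x) = δ := by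
          field_simp
        simp only [hd]
    rw [himg]
    have hsmul : (fun δ : ℝ => 2 * g x * (((lipSlope (fun y => g y + δ * f y) x) ^ 2
            - (lipSlope g x) ^ 2) / (2 * δ))) '' Set.Ioi 0
        = (2 * g x) • ((fun δ : ℝ => ((lipSlope (fun y => g y + δ * f y) x) ^ 2
            - (lipSlope g x) ^ 2) / (2 * δ)) '' Set.Ioi 0) := by
      rw [← Set.image_smul, Set.image_image]
      simp [smul_eq_mul]
    rw [hsmul, Real.sInf_smul_of_nonneg (by positivity), smul_eq_mul]

end metric
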